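/- Let R be a commutative ring, n a natural number, and V an n×n matrix over R. Let p ∈ R[X] be the determinant of the n×n matrix over R[X] whose (i,j) entry is C(V i j) − X·C(V j i), where C : R → R[X] is the constant-polynomial embedding. If p ≠ 0, then p.natDegree + p.natTrailingDegree = n; consequently p.natDegree − p.natTrailingDegree has the same parity as n, and in particular is even whenever n is even. -/

import Mathlib

open Polynomial

private lemma reflect_sum' {R : Type*} [CommRing R] {ι : Type*} (s : Finset ι)
    (f : ι → R[X]) (N : ℕ) :
    reflect N (∑ i ∈ s, f i) = ∑ i ∈ s, reflect N (f i) :=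
  map_sum (AddMonoidHom.mk' (reflect N) (fun a b => reflect_add a b N)) f s

private lemma reflect_zsmul' {R : Type*} [CommRing R] (z : ℤ) (f : R[X]) (N : ℕ) :
    reflect N (z • f) = z • reflect N f :=
  map_zsmul (AddMonoidHom.mk' (reflect N) (fun a b => reflect_add a b N)) z f

private lemma reflect_prod' {R : Type*} [CommRing R] {ι : Type*} (s : Finset ι)
    (f : ι → R[X]) (hf : ∀ i ∈ s, (f i).natDegree ≤ 1) :
    reflect s.card (∏ i ∈ s, f i) = ∏ i ∈ s, reflect 1 (f i) := by
  induction s using Finset.cons_induction with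
  | empty => simp
  | cons a s ha ih =>
    have hb : (∏ i ∈ s, f i).natDegree ≤ s.card := by
      calc (∏ i ∈ s, f i).natDegree ≤ ∑ i ∈ s, (f i).natDegree := natDegree_prod_le s f
        _ ≤ ∑ _i ∈ s, 1 := Finset.sum_le_sum fun i hi => hf i (Finset.mem_cons_of_mem hi)
        _ = s.card := by simp
    rw [Finset.prod_cons, Finset.prod_cons, Finset.card_cons, add_comm,
      reflect_mul _ _ (hf a (Finset.mem_cons_self a s)) hb,
      ih (fun i hi => hf i (Finset.mem_cons_of_mem hi))]

private lemma reflect_one_lin {R : Type*} [CommRing R] (a b : R) :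
    reflect 1 (C a - X * C b) = -(C b - X * C a) := by
  have h1 : C a - X * C b = C a * X ^ 0 + C (-b) * X ^ 1 := by
    rw [pow_zero, pow_one, mul_one, C_neg]; ring
  rw [h1, reflect_add, reflect_C_mul_X_pow, reflect_C_mul_X_pow,
    revAt_le (Nat.zero_le 1), revAt_le le_rfl]
  rw [C_neg]
  ring

/-- If `p(X) = det (V - X • Vᵀ)` (entries read in `R[X]`) is nonzero, for `V` an `n × n` matrix,
then `natDegree p + natTrailingDegree p = n`; consequently
`natDegree p - natTrailingDegree p` has the same parity as `n`, and is even when `n` is even. -/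
theorem alexander_poly_degree_parity {R : Type*} [CommRing R] (n : ℕ)
    (V : Matrix (Fin n) (Fin n) R) (p : R[X])
    (hp : p = Matrix.det (Matrix.of fun i j => C (V i j) - X * C (V j i)))
    (hp0 : p ≠ 0) :
    p.natDegree + p.natTrailingDegree = n ∧
    (p.natDegree - p.natTrailingDegree) % 2 = n % 2 ∧
    (Even n → Even (p.natDegree - p.natTrailingDegree)) := by
  set M : Matrix (Fin n) (Fin n) R[X] :=
    Matrix.of fun i j => C (V i j) - X * C (V j i) with hM
  -- degree bound
  have hdeg : p.natDegree ≤ n := by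
    have hrw : M = (X : R[X]) • ((-(Matrix.transpose V)).map C) + V.map C := by
      ext i j
      simp only [hM, Matrix.add_apply, Matrix.smul_apply, Matrix.map_apply, Matrix.of_apply,
        Matrix.neg_apply, Matrix.transpose_apply, smul_eq_mul, map_neg]
      ring
    rw [hp, hrw]
    simpa using Polynomial.natDegree_det_X_add_C_le (-(Matrix.transpose V)) V
  -- entry degree bound
  have hMdeg : ∀ i j : Fin n, (M i j).natDegree ≤ 1 := by
    intro i j
    refine (natDegree_sub_le _ _).trans (max_le ((natDegree_C _).le.trans (Nat.zero_le 1)) ?_)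
    exact natDegree_mul_le.trans (by simp [natDegree_X_le])
  -- reflection identity
  have hrefl : reflect n p = (-1 : R[X]) ^ n * p := by
    have hc : (Finset.univ : Finset (Fin n)).card = n := by simp
    have key : ∀ σ : Equiv.Perm (Fin n),
        reflect n (∏ i, M (σ i) i) = (-1 : R[X]) ^ n * ∏ i, M i (σ i) := by
      intro σ
      have hpr := reflect_prod' Finset.univ (fun i => M (σ i) i) (fun i _ => hMdeg _ _)
      rw [hc] at hpr
      rw [hpr]
      have h1 : ∀ i : Fin n, reflect 1 (M (σ i) i) = -(M i (σ i)) := by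
        intro i
        show reflect 1 (C (V (σ i) i) - X * C (V i (σ i))) = _
        rw [reflect_one_lin]; rfl
      rw [Finset.prod_congr rfl (fun i _ => h1 i),
        Finset.prod_congr rfl (fun i (_ : i ∈ Finset.univ) =>
          (neg_one_mul (M i (σ i))).symm), Finset.prod_mul_distrib,
        Finset.prod_const, Finset.card_univ, Fintype.card_fin]
    rw [hp]
    conv_lhs => rw [Matrix.det_apply]
    conv_rhs => rw [← Matrix.det_transpose M, Matrix.det_apply]
    rw [reflect_sum', Finset.mul_sum]
    refine Finset.sum_congr rfl fun σ _ => ?_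
    rw [Units.smul_def, Units.smul_def, reflect_zsmul', key σ]
    simp only [Matrix.transpose_apply]
    rw [zsmul_eq_mul, zsmul_eq_mul]
    ring
  -- coefficient symmetry
  have hcoeff : ∀ k, k ≤ n → p.coeff (n - k) = (-1 : R) ^ n * p.coeff k := by
    intro k hk
    have h := congrArg (fun q => q.coeff k) hrefl
    simp only [coeff_reflect, revAt_le hk] at h
    rw [h, ← C_1, ← C_neg, ← C_pow, coeff_C_mul]
  have hT : p.natTrailingDegree ≤ p.natDegree := natTrailingDegree_le_natDegree p
  have hunit : ∀ x : R, (-1 : R) ^ n * x = 0 → x = 0 := by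
    intro x hx
    have := congrArg (fun y => (-1 : R) ^ n * y) hx
    simpa [← mul_assoc, ← mul_pow] using this
  have h1 : n ≤ p.natDegree + p.natTrailingDegree := by
    have h := hcoeff p.natTrailingDegree (hT.trans hdeg)
    have hne : p.coeff (n - p.natTrailingDegree) ≠ 0 := by
      rw [h]
      intro hz
      exact trailingCoeff_nonzero_iff_nonzero.mpr hp0 (hunit _ hz)
    have := le_natDegree_of_ne_zero hne
    omega
  have h2 : p.natDegree + p.natTrailingDegree ≤ n := by
    have h := hcoeff p.natDegree hdeg
    have hne : p.coeff (n - p.natDegree) ≠ 0 := by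
      rw [h]
      intro hz
      exact leadingCoeff_ne_zero.mpr hp0 (hunit _ hz)
    have := natTrailingDegree_le_of_ne_zero hne
    omega
  have hsum : p.natDegree + p.natTrailingDegree = n := le_antisymm h2 h1
  refine ⟨hsum, by omega, fun hn => ?_⟩
  rw [Nat.even_iff] at hn ⊢
  omega
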